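/- arXiv:1507.06061 — 5 statements merged into one kernel-verified Lean document; each statement's English description precedes it below -/
import Mathlib

section
/- Let α > 0 and let β : ℝ → ℝ be a C¹, 2π-periodic function with ∫₀^{2π} β(s) ds > 0. Then there exists a unique C², positive, 2π-periodic function Δ : ℝ → ℝ solving Δ'(s) = α − β(s)Δ(s) for all s, and it is given explicitly by Δ(s) = α · (∫_s^{s+2π} exp(∫_s^t β(u) du) dt) / (exp(∫₀^{2π} β(u) du) − 1). -/
open Real intervalIntegral

theorem stmt0 (α : ℝ) (hα : 0 < α) (β : ℝ → ℝ) (hβ : ContDiff ℝ 1 β)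
    (hβper : Function.Periodic β (2 * π))
    (hβint : 0 < ∫ s in (0:ℝ)..(2 * π), β s) :
    ∃ Δ : ℝ → ℝ,
      (∀ s, HasDerivAt Δ (α - β s * Δ s) s) ∧
      Function.Periodic Δ (2 * π) ∧
      ContDiff ℝ 2 Δ ∧
      (∀ s, 0 < Δ s) ∧
      (∀ s, Δ s = α * (∫ t in s..(s + 2 * π), Real.exp (∫ u in s..t, β u)) /
          (Real.exp (∫ u in (0:ℝ)..(2 * π), β u) - 1)) ∧
      (∀ Δ' : ℝ → ℝ, (∀ s, HasDerivAt Δ' (α - β s * Δ' s) s) →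
        Function.Periodic Δ' (2 * π) → Δ' = Δ) := by
  have hπ : (0:ℝ) < 2 * π := by positivity
  have hβc : Continuous β := hβ.continuous
  have hβi : ∀ a b : ℝ, IntervalIntegrable β MeasureTheory.volume a b :=
    fun a b => hβc.intervalIntegrable a b
  set L : ℝ := ∫ s in (0:ℝ)..(2 * π), β s with hL
  set B : ℝ → ℝ := fun s => ∫ u in (0:ℝ)..s, β u with hBdef
  have hBderiv : ∀ s, HasDerivAt B (β s) s := fun s =>
    intervalIntegral.integral_hasDerivAt_right (hβi 0 s)
      (hβc.stronglyMeasurableAtFilter _ _) hβc.continuousAt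
  have hBsub : ∀ s t : ℝ, (∫ u in s..t, β u) = B t - B s := by
    intro s t
    rw [hBdef, ← intervalIntegral.integral_interval_sub_left (hβi 0 t) (hβi 0 s)]
  have hBadd : ∀ s : ℝ, B (s + 2 * π) = B s + L := by
    intro s
    have h1 : (∫ u in s..(s + 2 * π), β u) = L := by
      rw [hL, hβper.intervalIntegral_add_eq s 0, zero_add]
    have h2 := hBsub s (s + 2 * π)
    rw [h1] at h2; linarith
  set E : ℝ := Real.exp L with hE
  have hE1 : 1 < E := lt_of_lt_of_le (by linarith) (Real.add_one_le_exp L)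
  have hE1' : (0:ℝ) < E - 1 := by linarith
  set g : ℝ → ℝ := fun t => Real.exp (B t) with hgdef
  have hgderiv : ∀ t, HasDerivAt g (Real.exp (B t) * β t) t := fun t => (hBderiv t).exp
  have hgc : Continuous g :=
    continuous_iff_continuousAt.2 fun t => (hgderiv t).continuousAt
  have hgi : ∀ a b : ℝ, IntervalIntegrable g MeasureTheory.volume a b :=
    fun a b => hgc.intervalIntegrable a b
  have hgpos : ∀ t, 0 < g t := fun t => Real.exp_pos _
  have hgE : ∀ t, g (t + 2 * π) = E * g t := by
    intro t
    simp only [hgdef]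
    rw [hBadd t, Real.exp_add, hE]
    ring
  set G : ℝ → ℝ := fun s => ∫ t in (0:ℝ)..s, g t with hGdef
  have hGderiv : ∀ s, HasDerivAt G (g s) s := fun s =>
    intervalIntegral.integral_hasDerivAt_right (hgi 0 s)
      (hgc.stronglyMeasurableAtFilter _ _) hgc.continuousAt
  set I : ℝ → ℝ := fun s => ∫ t in s..(s + 2 * π), g t with hIdef
  have hIG : ∀ s, I s = G (s + 2 * π) - G s := by
    intro s
    show (∫ t in s..(s + 2 * π), g t) =
      (∫ t in (0:ℝ)..(s + 2 * π), g t) - ∫ t in (0:ℝ)..s, g t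
    exact (intervalIntegral.integral_interval_sub_left (hgi 0 _) (hgi 0 s)).symm
  have hIderiv : ∀ s, HasDerivAt I (g (s + 2 * π) - g s) s := by
    intro s
    have h1 : HasDerivAt (fun s => G (s + 2 * π)) (g (s + 2 * π)) s := by
      have := (hGderiv (s + 2 * π)).comp s ((hasDerivAt_id s).add_const (2 * π))
      simpa [Function.comp_def] using this
    exact (h1.sub (hGderiv s)).congr_of_eventuallyEq
      (Filter.Eventually.of_forall fun x => hIG x)
  have hIpos : ∀ s, 0 < I s := fun s =>
    intervalIntegral.intervalIntegral_pos_of_pos (hgi s _) hgpos (by linarith)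
  have hIper : ∀ s, I (s + 2 * π) = E * I s := by
    intro s
    have h1 : (∫ t in s..(s + 2 * π), g (t + 2 * π)) =
        ∫ t in (s + 2 * π)..(s + 2 * π + 2 * π), g t :=
      intervalIntegral.integral_comp_add_right g (2 * π)
    have h2 : (∫ t in s..(s + 2 * π), g (t + 2 * π)) = E * I s := by
      simp only [hgE]
      rw [intervalIntegral.integral_const_mul]
    show (∫ t in (s + 2 * π)..(s + 2 * π + 2 * π), g t) = E * I s
    rw [← h1, h2]
  set Δ : ℝ → ℝ := fun s => α * (Real.exp (-B s) * I s) / (E - 1) with hΔdef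
  have hexpneg : ∀ s, Real.exp (-B s) * g s = 1 := by
    intro s
    simp only [hgdef]
    rw [← Real.exp_add, neg_add_cancel, Real.exp_zero]
  -- ODE
  have hODE : ∀ s, HasDerivAt Δ (α - β s * Δ s) s := by
    intro s
    have h1 : HasDerivAt (fun s => Real.exp (-B s)) (Real.exp (-B s) * (-β s)) s :=
      ((hBderiv s).neg).exp
    have h3 := ((h1.mul (hIderiv s)).const_mul α).div_const (E - 1)
    have heq : α * (Real.exp (-B s) * (-β s) * I s +
        Real.exp (-B s) * (g (s + 2 * π) - g s)) / (E - 1) = α - β s * Δ s := by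
      rw [hgE s]
      simp only [hΔdef]
      have hx := hexpneg s
      field_simp
      linear_combination (E - 1) * hx
    rw [heq] at h3
    exact h3
  -- periodicity
  have hΔper : Function.Periodic Δ (2 * π) := by
    intro s
    simp only [hΔdef]
    rw [hBadd s, hIper s, neg_add, Real.exp_add]
    have h1 : Real.exp (-L) * E = 1 := by
      rw [hE, ← Real.exp_add, neg_add_cancel, Real.exp_zero]
    rw [show Real.exp (-B s) * Real.exp (-L) * (E * I s)
        = Real.exp (-L) * E * (Real.exp (-B s) * I s) from by ring, h1, one_mul]
  -- smoothness
  have hΔdiff : Differentiable ℝ Δ := fun s => (hODE s).differentiableAt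
  have hΔderiv : deriv Δ = fun s => α - β s * Δ s := funext fun s => (hODE s).deriv
  have hcontd : Continuous fun s => α - β s * Δ s :=
    continuous_const.sub (hβc.mul hΔdiff.continuous)
  have hΔC1 : ContDiff ℝ 1 Δ := by
    rw [contDiff_one_iff_deriv]
    refine ⟨hΔdiff, ?_⟩
    rw [hΔderiv]
    exact hcontd
  have hΔC2 : ContDiff ℝ 2 Δ := by
    rw [show (2 : WithTop ℕ∞) = 1 + 1 from rfl, contDiff_succ_iff_deriv]
    refine ⟨hΔdiff, by simp, ?_⟩
    rw [hΔderiv]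
    exact contDiff_const.sub (hβ.mul hΔC1)
  -- positivity
  have hΔpos : ∀ s, 0 < Δ s := by
    intro s
    simp only [hΔdef]
    have h1 := hIpos s
    have h2 := Real.exp_pos (-B s)
    positivity
  -- formula
  have hform : ∀ s, Δ s = α * (∫ t in s..(s + 2 * π), Real.exp (∫ u in s..t, β u)) /
      (Real.exp (∫ u in (0:ℝ)..(2 * π), β u) - 1) := by
    intro s
    have h2 : ∀ t, Real.exp (∫ u in s..t, β u) = Real.exp (-B s) * g t := by
      intro t
      rw [hBsub s t]
      simp only [hgdef]
      rw [← Real.exp_add]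
      congr 1
      ring
    have h1 : (∫ t in s..(s + 2 * π), Real.exp (∫ u in s..t, β u)) =
        Real.exp (-B s) * I s := by
      simp only [h2]
      rw [intervalIntegral.integral_const_mul]
    rw [h1]
  -- uniqueness
  have huniq : ∀ Δ₂ : ℝ → ℝ, (∀ s, HasDerivAt Δ₂ (α - β s * Δ₂ s) s) →
      Function.Periodic Δ₂ (2 * π) → Δ₂ = Δ := by
    intro Δ₂ hODE2 hper2
    set h : ℝ → ℝ := fun s => (Δ₂ s - Δ s) * g s with hhdef
    have hhderiv : ∀ s, HasDerivAt h 0 s := by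
      intro s
      have hd := ((hODE2 s).sub (hODE s)).mul (hgderiv s)
      have heq : (α - β s * Δ₂ s - (α - β s * Δ s)) * g s +
          (Δ₂ s - Δ s) * (Real.exp (B s) * β s) = 0 := by
        simp only [hgdef]; ring
      rw [Pi.sub_apply, heq] at hd
      exact hd
    have hhdiff : Differentiable ℝ h := fun s => (hhderiv s).differentiableAt
    have hconst : ∀ x y, h x = h y :=
      fun x y => is_const_of_deriv_eq_zero hhdiff (fun x => (hhderiv x).deriv) x y
    have hg0 : g 0 = 1 := by
      simp only [hgdef, hBdef]
      simp
    have hg2π : g (2 * π) = E := by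
      set_option linter.unnecessarySimpa false in
      simpa [hg0] using hgE 0

    have hkey : h (2 * π) = h 0 := hconst _ _
    have hd0 : Δ₂ 0 = Δ 0 := by
      have h2 : Δ₂ (2 * π) = Δ₂ 0 := by have := hper2 0; rwa [zero_add] at this
      have h3 : Δ (2 * π) = Δ 0 := by have := hΔper 0; rwa [zero_add] at this
      simp only [hhdef] at hkey
      rw [h2, h3, hg2π, hg0, mul_one] at hkey
      have h4 : (Δ₂ 0 - Δ 0) * (E - 1) = 0 := by linarith
      rcases mul_eq_zero.1 h4 with h5 | h5
      · linarith
      · linarith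
    funext s
    have hs : h s = 0 := by
      rw [hconst s 0]
      simp only [hhdef]
      rw [hd0, hg0]
      ring
    simp only [hhdef] at hs
    rcases mul_eq_zero.1 hs with h5 | h5
    · linarith
    · exact absurd h5 (ne_of_gt (hgpos s))
  exact ⟨Δ, hODE, hΔper, hΔC2, hΔpos, hform, huniq⟩
end

section
/- Let α > 0 and β : ℝ → ℝ be C¹, 2π-periodic with ∫₀^{2π} β(s) ds > 0, and let Δ be the unique positive 2π-periodic solution of Δ' = α − βΔ. Then max_{s∈ℝ} Δ(s) ≤ α · 2π · exp(∫₀^{2π} β⁻(u) du) / (1 − exp(−∫₀^{2π} β(u) du)), where β⁻ = max(0, −β). -/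
open Real intervalIntegral

theorem stmt1 (α : ℝ) (hα : 0 < α) (β : ℝ → ℝ) (hβ : ContDiff ℝ 1 β)
    (hβper : Function.Periodic β (2 * π))
    (hβint : 0 < ∫ s in (0:ℝ)..(2 * π), β s)
    (Δ : ℝ → ℝ)
    (hΔode : ∀ s, HasDerivAt Δ (α - β s * Δ s) s)
    (hΔper : Function.Periodic Δ (2 * π))
    (hΔpos : ∀ s, 0 < Δ s) :
    ∀ s, Δ s ≤ α * (2 * π) * Real.exp (∫ u in (0:ℝ)..(2 * π), max 0 (-(β u))) /
      (1 - Real.exp (-(∫ u in (0:ℝ)..(2 * π), β u))) := by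
  intro s
  have hπ : 0 < 2 * π := by positivity
  set I : ℝ := ∫ u in (0:ℝ)..(2 * π), β u with hI
  set J : ℝ := ∫ u in (0:ℝ)..(2 * π), max 0 (-(β u)) with hJ
  have hc : Continuous β := hβ.continuous
  have hint : ∀ a b : ℝ, IntervalIntegrable β MeasureTheory.volume a b :=
    fun a b => hc.intervalIntegrable a b
  set B : ℝ → ℝ := fun t => ∫ u in (0:ℝ)..t, β u with hB
  have hBderiv : ∀ t, HasDerivAt B (β t) t := fun t =>
    intervalIntegral.integral_hasDerivAt_right (hint 0 t)
      (hc.stronglyMeasurableAtFilter _ _) hc.continuousAt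
  set E : ℝ → ℝ := fun t => Real.exp (B t) with hE
  have hEpos : ∀ t, 0 < E t := fun t => Real.exp_pos _
  have hEderiv : ∀ t, HasDerivAt E (β t * E t) t := fun t => by
    simpa [hE, mul_comm] using (hBderiv t).exp
  have hEc : Continuous E := Real.continuous_exp.comp
    (continuous_iff_continuousAt.mpr fun t => (hBderiv t).continuousAt)
  have hGderiv : ∀ t, HasDerivAt (fun t => E t * Δ t) (α * E t) t := fun t => by
    have h : HasDerivAt (fun t => E t * Δ t) (β t * E t * Δ t + E t * (α - β t * Δ t)) t :=
      (hEderiv t).mul (hΔode t)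
    convert h using 1
    ring
  have hFTC : E (s + 2 * π) * Δ (s + 2 * π) - E s * Δ s
      = ∫ u in s..(s + 2 * π), α * E u := by
    rw [intervalIntegral.integral_eq_sub_of_hasDerivAt (fun t _ => hGderiv t)
      ((continuous_const.mul hEc).intervalIntegrable _ _)]
  -- B (s + 2π) = B s + I
  have hBadd : B (s + 2 * π) = B s + I := by
    have h1 : (∫ u in (0:ℝ)..s, β u) + ∫ u in s..(s + 2 * π), β u
        = ∫ u in (0:ℝ)..(s + 2 * π), β u :=
      intervalIntegral.integral_add_adjacent_intervals (hint _ _) (hint _ _)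
    have h2 : (∫ u in s..(s + 2 * π), β u) = I := by
      rw [hI]
      simpa using hβper.intervalIntegral_add_eq s 0
    simp [hB, ← h1, h2]
  have hIpos : 0 < I := hβint
  -- pointwise bound on E on [s, s+2π]
  have hmaxper : Function.Periodic (fun u => max 0 (β u)) (2 * π) := fun x => by
    simp [hβper x]
  have hmaxint : ∀ a b : ℝ, IntervalIntegrable (fun u => max 0 (β u))
      MeasureTheory.volume a b :=
    fun a b => (continuous_const.max hc).intervalIntegrable a b
  have hIJ : (∫ u in (0:ℝ)..(2 * π), max 0 (β u)) = I + J := by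
    rw [hI, hJ, ← intervalIntegral.integral_add (hint _ _)
      (by exact (continuous_const.max hc.neg).intervalIntegrable _ _ :
        IntervalIntegrable (fun u => max 0 (-(β u))) MeasureTheory.volume 0 (2 * π))]
    congr 1
    ext u
    rcases le_total 0 (β u) with h | h
    · simp [max_eq_right h, max_eq_left (neg_nonpos.mpr h)]
    · simp [max_eq_left h, max_eq_right (neg_nonneg.mpr h)]
  have hEbound : ∀ u ∈ Set.Icc s (s + 2 * π), E u ≤ E s * Real.exp (I + J) := by
    intro u hu
    have h1 : B u - B s = ∫ v in s..u, β v := by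
      have := intervalIntegral.integral_add_adjacent_intervals (hint 0 s) (hint s u)
      simp [hB, ← this]
    have h2 : (∫ v in s..u, β v) ≤ ∫ v in s..u, max 0 (β v) :=
      intervalIntegral.integral_mono_on hu.1 (hint _ _) (hmaxint _ _)
        (fun v _ => le_max_right _ _)
    have h3 : (∫ v in s..u, max 0 (β v)) ≤ ∫ v in s..(s + 2 * π), max 0 (β v) := by
      have hsplit := intervalIntegral.integral_add_adjacent_intervals
        (hmaxint s u) (hmaxint u (s + 2 * π))
      have hnn : 0 ≤ ∫ v in u..(s + 2 * π), max 0 (β v) :=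
        intervalIntegral.integral_nonneg hu.2 (fun v _ => le_max_left _ _)
      linarith
    have h4 : (∫ v in s..(s + 2 * π), max 0 (β v)) = I + J := by
      rw [← hIJ]
      simpa using hmaxper.intervalIntegral_add_eq s 0
    have h5 : B u ≤ B s + (I + J) := by linarith [h1 ▸ (h2.trans (h3.trans_eq h4))]
    calc E u = Real.exp (B u) := rfl
      _ ≤ Real.exp (B s + (I + J)) := Real.exp_le_exp.mpr h5
      _ = E s * Real.exp (I + J) := by rw [Real.exp_add]
  -- integral bound
  have hIntBound : (∫ u in s..(s + 2 * π), α * E u)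
      ≤ α * (2 * π) * (E s * Real.exp (I + J)) := by
    have h := intervalIntegral.integral_mono_on (f := fun u => α * E u) (by linarith : s ≤ s + 2 * π)
      ((continuous_const.mul hEc).intervalIntegrable _ _)
      (_root_.intervalIntegrable_const (μ := MeasureTheory.volume) (c := α * (E s * Real.exp (I + J))))
      (fun u hu => by
        have := hEbound u hu
        have : α * E u ≤ α * (E s * Real.exp (I + J)) :=
          mul_le_mul_of_nonneg_left this hα.le
        exact this)
    have h2 : (∫ u in s..(s + 2 * π), α * (E s * Real.exp (I + J)))
        = (2 * π) * (α * (E s * Real.exp (I + J))) := by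
      rw [intervalIntegral.integral_const, smul_eq_mul]; ring_nf
    rw [h2] at h
    linarith
  -- key identity
  have hEadd : E (s + 2 * π) = E s * Real.exp I := by
    rw [hE]; simp only [hBadd, Real.exp_add]
  have hkey : E s * Δ s * (Real.exp I - 1) = ∫ u in s..(s + 2 * π), α * E u := by
    rw [← hFTC, hEadd, hΔper s]
    ring
  have hexpI : 1 < Real.exp I := by
    rw [← Real.exp_zero]; exact Real.exp_lt_exp.mpr hIpos
  have hden : 0 < Real.exp I - 1 := by linarith
  have hmain : Δ s * (Real.exp I - 1) ≤ α * (2 * π) * Real.exp (I + J) := by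
    have := hkey ▸ hIntBound
    have hEs := hEpos s
    nlinarith [hEpos s, (hΔpos s).le]
  have hrhs : α * (2 * π) * Real.exp J / (1 - Real.exp (-I))
      = α * (2 * π) * Real.exp (I + J) / (Real.exp I - 1) := by
    rw [Real.exp_neg, Real.exp_add]
    have h0 : Real.exp I ≠ 0 := (Real.exp_pos I).ne'
    field_simp
  rw [hrhs]
  rw [le_div_iff₀ hden]
  exact hmain
end

section
/- Let X(t) = (x₁(t),…,x_N(t)) solve the Winfree model ẋᵢ = ωᵢ − (κ/N) Σⱼ P(xⱼ) R(xᵢ) with P, R of class C² and 2π-periodic, ωᵢ ∈ (1−γ, 1+γ). Suppose on [0,t*] the dispersion satisfies max_{i,j}|xᵢ(t) − xⱼ(t)| < D. Then for all i,j and t ∈ [0,t*], setting μ(t) = (1/N)Σ_k x_k(t) and δ_{i,j} = xᵢ − xⱼ, one has d/dt δ_{i,j} < (2γ + Cκ D²) − κ P(μ) R'(μ) δ_{i,j}, where C = ‖P‖_∞‖R''‖_∞ + ‖P'‖_∞‖R'‖_∞. -/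
open Real

lemma per_deriv {f : ℝ → ℝ} {c : ℝ} (hf : Function.Periodic f c) :
    Function.Periodic (deriv f) c := by
  intro y
  have : (fun x => f (x + c)) = f := funext hf
  rw [← deriv_comp_add_const, this]

lemma bdd_abs {f : ℝ → ℝ} (hf : Continuous f) (hper : Function.Periodic f (2 * π)) :
    BddAbove (Set.range fun y => |f y|) := by
  have hc : (0:ℝ) < 2 * π := by positivity
  have hsub : Set.range (fun y => |f y|) ⊆ (fun y => |f y|) '' Set.Icc 0 (2 * π) := by
    rintro _ ⟨y, rfl⟩
    obtain ⟨z, hz, hfz⟩ := hper.exists_mem_Ico₀ hc y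
    exact ⟨z, Set.Ico_subset_Icc_self hz, by simp [hfz]⟩
  exact (((isCompact_Icc).image (hf.abs)).bddAbove).mono hsub

/-- global Lipschitz estimate from a deriv bound -/
lemma lip_of_deriv {f : ℝ → ℝ} (hf : Differentiable ℝ f) {K : ℝ}
    (hK : ∀ y, |deriv f y| ≤ K) (a b : ℝ) : |f a - f b| ≤ K * |a - b| := by
  have := Convex.norm_image_sub_le_of_norm_deriv_le (s := Set.univ) (f := f)
    (fun y _ => hf y) (fun y _ => hK y) convex_univ
    (Set.mem_univ b) (Set.mem_univ a)
  simpa [Real.norm_eq_abs] using this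

theorem stmt3 (N : ℕ) (hN : 0 < N) (P R : ℝ → ℝ)
    (hP : ContDiff ℝ 2 P) (hR : ContDiff ℝ 2 R)
    (hPper : Function.Periodic P (2 * π)) (hRper : Function.Periodic R (2 * π))
    (κ γ D tstar : ℝ) (hκ : 0 < κ) (hγ : γ ∈ Set.Ioo (0:ℝ) 1) (hD : 0 < D)
    (ω : Fin N → ℝ) (hω : ∀ i, ω i ∈ Set.Ioo (1 - γ) (1 + γ))
    (x : Fin N → ℝ → ℝ)
    (hode : ∀ i t, HasDerivAt (x i)
      (ω i - (κ / N) * ∑ j, P (x j t) * R (x i t)) t)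
    (hdisp : ∀ t ∈ Set.Icc (0:ℝ) tstar, ∀ i j, |x i t - x j t| < D)
    (C : ℝ)
    (hC : C = (⨆ y : ℝ, |P y|) * (⨆ y : ℝ, |deriv (deriv R) y|)
            + (⨆ y : ℝ, |deriv P y|) * (⨆ y : ℝ, |deriv R y|)) :
    ∀ i j, ∀ t ∈ Set.Icc (0:ℝ) tstar,
      deriv (fun u => x i u - x j u) t <
        (2 * γ + C * κ * D ^ 2)
          - κ * P ((∑ k, x k t) / N) * deriv R ((∑ k, x k t) / N)
              * (x i t - x j t) := by
  intro i j t ht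
  have hNR : (0:ℝ) < (N:ℝ) := by exact_mod_cast hN
  -- differentiability facts
  have hPdiff : Differentiable ℝ P := hP.differentiable (by norm_num)
  have hRdiff : Differentiable ℝ R := hR.differentiable (by norm_num)
  have hR' : ContDiff ℝ 1 (deriv R) := by
    have : ContDiff ℝ (1 + 1) R := by exact_mod_cast hR
    exact (contDiff_succ_iff_deriv.mp this).2.2
  have hR'diff : Differentiable ℝ (deriv R) := hR'.differentiable (by norm_num)
  -- sup norms
  set nP := ⨆ y : ℝ, |P y| with hnP
  set nP' := ⨆ y : ℝ, |deriv P y| with hnP'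
  set nR' := ⨆ y : ℝ, |deriv R y| with hnR'
  set nR'' := ⨆ y : ℝ, |deriv (deriv R) y| with hnR''
  have bP : ∀ y, |P y| ≤ nP := fun y =>
    le_ciSup (bdd_abs hP.continuous hPper) y
  have bP' : ∀ y, |deriv P y| ≤ nP' := fun y =>
    le_ciSup (bdd_abs (hP.continuous_deriv (by norm_num)) (per_deriv hPper)) y
  have bR' : ∀ y, |deriv R y| ≤ nR' := fun y =>
    le_ciSup (bdd_abs (hR.continuous_deriv (by norm_num)) (per_deriv hRper)) y
  have bR'' : ∀ y, |deriv (deriv R) y| ≤ nR'' := fun y =>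
    le_ciSup (bdd_abs (hR'.continuous_deriv le_rfl) (per_deriv (per_deriv hRper))) y
  have hnP0 : 0 ≤ nP := (abs_nonneg _).trans (bP 0)
  have hnR''0 : 0 ≤ nR'' := (abs_nonneg _).trans (bR'' 0)
  -- Lipschitz estimates
  have lipP : ∀ a b, |P a - P b| ≤ nP' * |a - b| := lip_of_deriv hPdiff bP'
  have lipR' : ∀ a b, |deriv R a - deriv R b| ≤ nR'' * |a - b| :=
    lip_of_deriv hR'diff bR''
  -- notation
  set μ := (∑ k, x k t) / N with hμ
  set a := x i t
  set b := x j t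
  -- distance of each particle to the mean
  have hmean : ∀ k, |x k t - μ| ≤ D := by
    intro k
    have h1 : x k t - μ = (∑ l, (x k t - x l t)) / N := by
      rw [hμ, Finset.sum_sub_distrib, Finset.sum_const, Finset.card_univ, Fintype.card_fin]
      field_simp
      ring
    rw [h1, abs_div, abs_of_pos hNR, div_le_iff₀ hNR]
    calc |∑ l, (x k t - x l t)| ≤ ∑ l, |x k t - x l t| :=
          Finset.abs_sum_le_sum_abs _ _
      _ ≤ ∑ _l : Fin N, D :=
          Finset.sum_le_sum fun l _ => (hdisp t ht k l).le
      _ = D * N := by simp [mul_comm]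
  have hab : |a - b| ≤ D := (hdisp t ht i j).le
  -- Taylor estimate : |R a - R b - R'(μ)(a-b)| ≤ nR'' * D * |a - b|
  have taylor : |R a - R b - deriv R μ * (a - b)| ≤ nR'' * D * |a - b| := by
    set c := deriv R μ with hc
    set g : ℝ → ℝ := fun y => R y - c * y with hg
    have hgd : ∀ y, HasDerivAt g (deriv R y - c) y := by
      intro y
      have hcy : HasDerivAt (fun y => c * y) c y := by
        simpa using (hasDerivAt_id y).const_mul c
      exact ((hRdiff y).hasDerivAt).sub hcy
    have hamem : a ∈ Set.Icc (μ - D) (μ + D) := by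
      have h := abs_sub_le_iff.mp (hmean i)
      constructor <;> [linarith [h.2]; linarith [h.1]]
    have hbmem : b ∈ Set.Icc (μ - D) (μ + D) := by
      have h := abs_sub_le_iff.mp (hmean j)
      constructor <;> [linarith [h.2]; linarith [h.1]]
    have key : |g a - g b| ≤ (nR'' * D) * |a - b| := by
      have := Convex.norm_image_sub_le_of_norm_deriv_le (s := Set.Icc (μ - D) (μ + D))
        (f := g) (fun y _ => (hgd y).differentiableAt)
        (fun y hy => by
          rw [(hgd y).deriv]
          have h1 : |y - μ| ≤ D := by
            rw [abs_sub_le_iff]; constructor <;>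
              [linarith [hy.2]; linarith [hy.1]]
          calc ‖deriv R y - c‖ = |deriv R y - deriv R μ| := by rw [Real.norm_eq_abs, hc]
            _ ≤ nR'' * |y - μ| := lipR' y μ
            _ ≤ nR'' * D := by nlinarith
        )
        (convex_Icc _ _) hbmem hamem
      simpa [Real.norm_eq_abs] using this
    have : g a - g b = R a - R b - c * (a - b) := by simp [hg]; ring
    rw [this] at key; linarith [key]
  -- derivative of the difference
  have hd : HasDerivAt (fun u => x i u - x j u)
      ((ω i - (κ / N) * ∑ k, P (x k t) * R a) - (ω j - (κ / N) * ∑ k, P (x k t) * R b)) t :=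
    (hode i t).sub (hode j t)
  rw [hd.deriv]
  -- rewrite using S = ∑ P(x k t)
  set S := ∑ k, P (x k t) with hS
  have hsum1 : ∑ k, P (x k t) * R a = S * R a := by rw [hS, Finset.sum_mul]
  have hsum2 : ∑ k, P (x k t) * R b = S * R b := by rw [hS, Finset.sum_mul]
  rw [hsum1, hsum2]
  -- frequency bound
  have hωij : ω i - ω j < 2 * γ := by
    have h1 := (hω i).2; have h2 := (hω j).1; simp only [Set.mem_Ioo] at *; linarith
  -- bound |S/N| ≤ nP
  have hSbound : |S / N| ≤ nP := by
    rw [abs_div, abs_of_pos hNR, div_le_iff₀ hNR]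
    calc |S| ≤ ∑ k, |P (x k t)| := Finset.abs_sum_le_sum_abs _ _
      _ ≤ ∑ _k : Fin N, nP := Finset.sum_le_sum fun k _ => bP _
      _ = nP * N := by simp [mul_comm]
  -- bound |S/N - P μ| ≤ nP' * D
  have hSμ : |S / N - P μ| ≤ nP' * D := by
    have h1 : S / N - P μ = (∑ k, (P (x k t) - P μ)) / N := by
      rw [Finset.sum_sub_distrib, Finset.sum_const, Finset.card_univ, Fintype.card_fin]
      field_simp
      rw [nsmul_eq_mul]
    rw [h1, abs_div, abs_of_pos hNR, div_le_iff₀ hNR]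
    calc |∑ k, (P (x k t) - P μ)| ≤ ∑ k, |P (x k t) - P μ| :=
          Finset.abs_sum_le_sum_abs _ _
      _ ≤ ∑ _k : Fin N, nP' * D := Finset.sum_le_sum fun k _ => by
          calc |P (x k t) - P μ| ≤ nP' * |x k t - μ| := lipP _ _
            _ ≤ nP' * D := by
                have := (abs_nonneg (deriv P 0)).trans (bP' 0)
                nlinarith [hmean k, abs_nonneg (x k t - μ)]
      _ = nP' * D * N := by simp [mul_comm]
  -- the key estimate
  have hRμ : |deriv R μ| ≤ nR' := bR' μ
  have key : |(S / N) * (R a - R b) - P μ * deriv R μ * (a - b)| ≤ C * D ^ 2 := by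
    have hdecomp : (S / N) * (R a - R b) - P μ * deriv R μ * (a - b)
        = (S / N) * (R a - R b - deriv R μ * (a - b))
          + (S / N - P μ) * (deriv R μ * (a - b)) := by ring
    rw [hdecomp]
    have h3 : nR'' * D * |a - b| ≤ nR'' * D * D :=
      mul_le_mul_of_nonneg_left hab (mul_nonneg hnR''0 hD.le)
    have e1 : |(S / (N:ℝ)) * (R a - R b - deriv R μ * (a - b))| ≤ nP * (nR'' * D * D) := by
      rw [abs_mul]
      exact mul_le_mul hSbound (taylor.trans h3) (abs_nonneg _) hnP0
    have e2 : |(S / (N:ℝ) - P μ) * (deriv R μ * (a - b))| ≤ (nP' * D) * (nR' * D) := by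
      rw [abs_mul, abs_mul]
      have hB : |deriv R μ| * |a - b| ≤ nR' * D :=
        mul_le_mul hRμ hab (abs_nonneg _) ((abs_nonneg _).trans hRμ)
      exact mul_le_mul hSμ hB (mul_nonneg (abs_nonneg _) (abs_nonneg _))
        ((abs_nonneg _).trans hSμ)
    refine (abs_add_le _ _).trans ?_
    have heq : nP * (nR'' * D * D) + (nP' * D) * (nR' * D)
        = (nP * nR'' + nP' * nR') * D ^ 2 := by ring
    rw [hC]
    linarith [add_le_add e1 e2]
  -- finish
  have hfinal : P μ * deriv R μ * (a - b) - (S / N) * (R a - R b) ≤ C * D ^ 2 := by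
    have := neg_abs_le ((S / N) * (R a - R b) - P μ * deriv R μ * (a - b))
    linarith [key]
  have hrw : (κ / N) * (S * R a) - (κ / N) * (S * R b) = κ * ((S / N) * (R a - R b)) := by
    field_simp
  have hone : κ * (P μ * deriv R μ * (a - b) - (S / N) * (R a - R b)) ≤ κ * (C * D ^ 2) :=
    mul_le_mul_of_nonneg_left hfinal hκ.le
  have hc1 : κ * (C * D ^ 2) = C * κ * D ^ 2 := by ring
  have hc2 : κ * (P μ * deriv R μ * (a - b) - (S / N) * (R a - R b))
      = κ * P μ * deriv R μ * (a - b) - κ * ((S / N) * (R a - R b)) := by ring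
  linarith [hone]
end

section
/- Let X(t) solve the Winfree model with dispersion max_{i,j}|xᵢ(t)−xⱼ(t)| < D on [0,t*], and let μ(t) = (1/N)Σ_k x_k(t). Then |1 − κ P(μ(t)) R(μ(t)) − μ'(t)| ≤ γ + C̃ κ D for all t ∈ [0,t*], where C̃ = ‖P'‖_∞‖R‖_∞ + ‖P‖_∞‖R'‖_∞. -/
open Real

lemma periodic_deriv' (f : ℝ → ℝ) (c : ℝ) (h : Function.Periodic f c) :
    Function.Periodic (deriv f) c := by
  intro y
  have : (fun z => f (z + c)) = f := funext fun z => h z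
  calc deriv f (y + c) = deriv (fun z => f (z + c)) y := (deriv_comp_add_const f c y).symm
    _ = deriv f y := by rw [this]

lemma periodic_bdd (f : ℝ → ℝ) (hf : Continuous f) (h : Function.Periodic f (2 * π)) :
    (∀ y, |f y| ≤ ⨆ y : ℝ, |f y|) ∧ 0 ≤ ⨆ y : ℝ, |f y| := by
  have hπ : (0:ℝ) < 2 * π := by positivity
  have hbdd : BddAbove (Set.range fun y : ℝ => |f y|) := by
    have hc : IsCompact ((fun y : ℝ => |f y|) '' Set.Icc 0 (2 * π)) :=
      (isCompact_Icc).image (by fun_prop)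
    rcases hc.bddAbove with ⟨M, hM⟩
    refine ⟨M, ?_⟩
    rintro v ⟨y, rfl⟩
    rcases h.exists_mem_Ico₀ hπ y with ⟨z, hz, hfz⟩
    show |f y| ≤ M
    rw [hfz]
    exact hM ⟨z, ⟨hz.1, hz.2.le⟩, rfl⟩
  have hle : ∀ y, |f y| ≤ ⨆ y : ℝ, |f y| := fun y => le_ciSup hbdd y
  exact ⟨hle, le_trans (abs_nonneg (f 0)) (hle 0)⟩

lemma lip_bound (f : ℝ → ℝ) (hf : ContDiff ℝ 2 f) (h : Function.Periodic f (2 * π))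
    (a b : ℝ) : |f a - f b| ≤ (⨆ y : ℝ, |deriv f y|) * |a - b| := by
  have hdc : Continuous (deriv f) := hf.continuous_deriv (by norm_num)
  have hdb := (periodic_bdd (deriv f) hdc (periodic_deriv' f (2 * π) h)).1
  have hdiff : ∀ y ∈ (Set.univ : Set ℝ), DifferentiableAt ℝ f y := fun y _ =>
    (hf.differentiable (by norm_num)).differentiableAt
  have := Convex.norm_image_sub_le_of_norm_deriv_le hdiff
    (fun y _ => by simpa [Real.norm_eq_abs] using hdb y) convex_univ
    (Set.mem_univ b) (Set.mem_univ a)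
  simpa [Real.norm_eq_abs] using this

theorem stmt5 (N : ℕ) (hN : 0 < N) (P R : ℝ → ℝ)
    (hP : ContDiff ℝ 2 P) (hR : ContDiff ℝ 2 R)
    (hPper : Function.Periodic P (2 * π)) (hRper : Function.Periodic R (2 * π))
    (κ γ D tstar : ℝ) (hκ : 0 < κ) (hγ : γ ∈ Set.Ioo (0:ℝ) 1) (hD : 0 < D)
    (ω : Fin N → ℝ) (hω : ∀ i, ω i ∈ Set.Ioo (1 - γ) (1 + γ))
    (x : Fin N → ℝ → ℝ)
    (hode : ∀ i t, HasDerivAt (x i)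
      (ω i - (κ / N) * ∑ j, P (x j t) * R (x i t)) t)
    (hdisp : ∀ t ∈ Set.Icc (0:ℝ) tstar, ∀ i j, |x i t - x j t| < D)
    (Ct : ℝ)
    (hCt : Ct = (⨆ y : ℝ, |deriv P y|) * (⨆ y : ℝ, |R y|)
            + (⨆ y : ℝ, |P y|) * (⨆ y : ℝ, |deriv R y|)) :
    ∀ t ∈ Set.Icc (0:ℝ) tstar,
      |1 - κ * P ((∑ k, x k t) / N) * R ((∑ k, x k t) / N)
        - deriv (fun u => (∑ k, x k u) / N) t| ≤ γ + Ct * κ * D := by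
  intro t ht
  have hNR : (0:ℝ) < (N:ℝ) := by exact_mod_cast hN
  have hNne : (N:ℝ) ≠ 0 := ne_of_gt hNR
  set μ : ℝ := (∑ k, x k t) / N with hμdef
  -- bounds on P, R and derivatives
  obtain ⟨hPb, hPnn⟩ := periodic_bdd P (hP.continuous) hPper
  obtain ⟨hRb, hRnn⟩ := periodic_bdd R (hR.continuous) hRper
  have hPdnn := (periodic_bdd (deriv P) (hP.continuous_deriv (by norm_num))
    (periodic_deriv' P (2 * π) hPper)).2
  have hRdnn := (periodic_bdd (deriv R) (hR.continuous_deriv (by norm_num))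
    (periodic_deriv' R (2 * π) hRper)).2
  -- derivative of μ
  have hderiv : deriv (fun u => (∑ k, x k u) / N) t
      = (∑ k, (ω k - (κ / N) * ∑ j, P (x j t) * R (x k t))) / N := by
    have : HasDerivAt (fun u => (∑ k, x k u) / N)
        ((∑ k, (ω k - (κ / N) * ∑ j, P (x j t) * R (x k t))) / N) t :=
      (HasDerivAt.fun_sum fun k _ => hode k t).div_const N
    exact this.deriv
  -- |μ - x j t| ≤ D
  have hμclose : ∀ j, |μ - x j t| ≤ D := by
    intro j
    have : μ - x j t = (∑ k, (x k t - x j t)) / N := by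
      rw [hμdef, Finset.sum_sub_distrib, Finset.sum_const, Finset.card_univ,
        Fintype.card_fin, nsmul_eq_mul]
      field_simp
    rw [this, abs_div, abs_of_pos hNR, div_le_iff₀ hNR]
    calc |∑ k, (x k t - x j t)| ≤ ∑ k, |x k t - x j t| :=
          Finset.abs_sum_le_sum_abs _ _
      _ ≤ ∑ _k : Fin N, D := Finset.sum_le_sum fun k _ => (hdisp t ht k j).le
      _ = D * N := by simp [mul_comm]
  -- per-pair bound
  have hpair : ∀ i j : Fin N, |P (x j t) * R (x i t) - P μ * R μ| ≤ Ct * D := by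
    intro i j
    have h1 : |P μ - P (x j t)| ≤ (⨆ y : ℝ, |deriv P y|) * D := by
      calc |P μ - P (x j t)| ≤ (⨆ y : ℝ, |deriv P y|) * |μ - x j t| :=
            lip_bound P hP hPper μ (x j t)
        _ ≤ (⨆ y : ℝ, |deriv P y|) * D :=
            mul_le_mul_of_nonneg_left (hμclose j) hPdnn
    have h2 : |R μ - R (x i t)| ≤ (⨆ y : ℝ, |deriv R y|) * D := by
      calc |R μ - R (x i t)| ≤ (⨆ y : ℝ, |deriv R y|) * |μ - x i t| :=
            lip_bound R hR hRper μ (x i t)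
        _ ≤ (⨆ y : ℝ, |deriv R y|) * D :=
            mul_le_mul_of_nonneg_left (hμclose i) hRdnn
    have hdecomp : P (x j t) * R (x i t) - P μ * R μ
        = (P (x j t) - P μ) * R μ + P (x j t) * (R (x i t) - R μ) := by ring
    calc |P (x j t) * R (x i t) - P μ * R μ|
        ≤ |(P (x j t) - P μ) * R μ| + |P (x j t) * (R (x i t) - R μ)| := by
          rw [hdecomp]; exact abs_add_le _ _
      _ = |P (x j t) - P μ| * |R μ| + |P (x j t)| * |R (x i t) - R μ| := by
          rw [abs_mul, abs_mul]
      _ ≤ ((⨆ y : ℝ, |deriv P y|) * D) * (⨆ y : ℝ, |R y|)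
          + (⨆ y : ℝ, |P y|) * ((⨆ y : ℝ, |deriv R y|) * D) := by
          gcongr
          · rw [abs_sub_comm]; exact h1
          · exact hRb μ
          · exact hPb _
          · rw [abs_sub_comm]; exact h2
      _ = Ct * D := by rw [hCt]; ring
  -- algebraic identity
  have key : 1 - κ * P μ * R μ - (∑ k, (ω k - (κ / N) * ∑ j, P (x j t) * R (x k t))) / N
      = (∑ k, (1 - ω k)) / (N:ℝ)
        + (κ / ((N:ℝ) * N)) * ∑ k, ∑ j, (P (x j t) * R (x k t) - P μ * R μ) := by
    have e1 : ∀ k : Fin N, ∑ j, (P (x j t) * R (x k t) - P μ * R μ)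
        = (∑ j, P (x j t) * R (x k t)) - N * (P μ * R μ) := by
      intro k
      rw [Finset.sum_sub_distrib, Finset.sum_const, Finset.card_univ, Fintype.card_fin,
        nsmul_eq_mul]
    simp only [e1, Finset.sum_sub_distrib, Finset.sum_const, Finset.card_univ,
      Fintype.card_fin, nsmul_eq_mul, ← Finset.mul_sum]
    field_simp
    ring
  rw [hderiv, key]
  -- bound the two pieces
  have hA : |(∑ k, (1 - ω k)) / (N:ℝ)| ≤ γ := by
    rw [abs_div, abs_of_pos hNR, div_le_iff₀ hNR]
    calc |∑ k, (1 - ω k)| ≤ ∑ k, |1 - ω k| := Finset.abs_sum_le_sum_abs _ _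
      _ ≤ ∑ _k : Fin N, γ := by
          refine Finset.sum_le_sum fun k _ => ?_
          have h1 := (hω k).1
          have h2 := (hω k).2
          rw [abs_le]; constructor <;> linarith
      _ = γ * N := by simp [mul_comm]
  have hB : |(κ / ((N:ℝ) * N)) * ∑ k, ∑ j, (P (x j t) * R (x k t) - P μ * R μ)|
      ≤ Ct * κ * D := by
    rw [abs_mul, abs_div, abs_of_pos hκ, abs_of_pos (by positivity : (0:ℝ) < (N:ℝ) * N)]
    have hsum : |∑ k, ∑ j, (P (x j t) * R (x k t) - P μ * R μ)| ≤ (N:ℝ) * N * (Ct * D) := by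
      calc |∑ k : Fin N, ∑ j : Fin N, (P (x j t) * R (x k t) - P μ * R μ)|
          ≤ ∑ k : Fin N, |∑ j : Fin N, (P (x j t) * R (x k t) - P μ * R μ)| :=
            Finset.abs_sum_le_sum_abs _ _
        _ ≤ ∑ k : Fin N, ∑ j : Fin N, |P (x j t) * R (x k t) - P μ * R μ| :=
            Finset.sum_le_sum fun k _ => Finset.abs_sum_le_sum_abs _ _
        _ ≤ ∑ _k : Fin N, ∑ _j : Fin N, Ct * D :=
            Finset.sum_le_sum fun k _ => Finset.sum_le_sum fun j _ => hpair k j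
        _ = (N:ℝ) * N * (Ct * D) := by simp; ring
    calc κ / ((N:ℝ) * N) * |∑ k, ∑ j, (P (x j t) * R (x k t) - P μ * R μ)|
        ≤ κ / ((N:ℝ) * N) * ((N:ℝ) * N * (Ct * D)) := by
          exact mul_le_mul_of_nonneg_left hsum (by positivity)
      _ = Ct * κ * D := by field_simp
  calc |(∑ k, (1 - ω k)) / (N:ℝ)
        + (κ / ((N:ℝ) * N)) * ∑ k, ∑ j, (P (x j t) * R (x k t) - P μ * R μ)|
      ≤ |(∑ k, (1 - ω k)) / (N:ℝ)|
        + |(κ / ((N:ℝ) * N)) * ∑ k, ∑ j, (P (x j t) * R (x k t) - P μ * R μ)| :=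
        abs_add_le _ _
    _ ≤ γ + Ct * κ * D := add_le_add hA hB
end

section
/- For P₀(x) = 1 + cos x, R(x) = sin x, and any κ ∈ (0, 4/(3√3)), the synchronization integral satisfies ∫₀^{2π} P₀(s)R'(s)/(1 − κP₀(s)R(s)) ds = ∫₀^{2π} sin²(s)/(1 − κ(1+cos s)sin s) ds > π/3; in particular the synchronization hypothesis H3 holds for β = 0. -/
open Real intervalIntegral

theorem stmt10 (κ : ℝ) (hκ : κ ∈ Set.Ioo (0:ℝ) (4 / (3 * Real.sqrt 3))) :
    (∫ s in (0:ℝ)..(2 * π),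
        (1 + Real.cos s) * Real.cos s / (1 - κ * ((1 + Real.cos s) * Real.sin s)))
      = (∫ s in (0:ℝ)..(2 * π),
          Real.sin s ^ 2 / (1 - κ * ((1 + Real.cos s) * Real.sin s))) ∧
    π / 3 < ∫ s in (0:ℝ)..(2 * π),
        Real.sin s ^ 2 / (1 - κ * ((1 + Real.cos s) * Real.sin s)) := by
  obtain ⟨hκ0, hκ1⟩ := hκ
  have h3pos : (0:ℝ) < 3 * Real.sqrt 3 := by positivity
  have hs3 : Real.sqrt 3 ^ 2 = 3 := Real.sq_sqrt (by norm_num)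
  have hκ27 : κ ^ 2 * 27 < 16 := by
    have h := (lt_div_iff₀ h3pos).mp hκ1
    nlinarith [Real.sqrt_nonneg 3]
  have hg27 : ∀ s : ℝ, 16 * ((1 + Real.cos s) * Real.sin s) ^ 2 ≤ 27 := by
    intro s
    have h1 := Real.sin_sq_add_cos_sq s
    have h2 := Real.neg_one_le_cos s
    have h3 := Real.cos_le_one s
    nlinarith [sq_nonneg (2 * Real.cos s - 1), sq_nonneg (2 * Real.cos s + 3)]
  have hbound : ∀ s : ℝ, (κ * ((1 + Real.cos s) * Real.sin s)) ^ 2 < 1 := by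
    intro s
    have h1 := hg27 s
    nlinarith [mul_nonneg (sq_nonneg κ) (by linarith : (0:ℝ) ≤ 27 - 16 * ((1 + Real.cos s) * Real.sin s) ^ 2)]
  have hD : ∀ s : ℝ, 0 < 1 - κ * ((1 + Real.cos s) * Real.sin s) := by
    intro s
    nlinarith [hbound s, sq_nonneg (1 - κ * ((1 + Real.cos s) * Real.sin s))]
  have hD' : ∀ s : ℝ, 0 < 1 + κ * ((1 + Real.cos s) * Real.sin s) := by
    intro s
    nlinarith [hbound s, sq_nonneg (1 + κ * ((1 + Real.cos s) * Real.sin s))]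
  have hcont1 : Continuous fun s => (1 + Real.cos s) * Real.cos s / (1 - κ * ((1 + Real.cos s) * Real.sin s)) := by
    apply Continuous.div (by fun_prop) (by fun_prop)
    exact fun s => (hD s).ne'
  have hcont2 : Continuous fun s => Real.sin s ^ 2 / (1 - κ * ((1 + Real.cos s) * Real.sin s)) := by
    apply Continuous.div (by fun_prop) (by fun_prop)
    exact fun s => (hD s).ne'
  have hcont3 : Continuous fun s => Real.sin s ^ 2 / (1 + κ * ((1 + Real.cos s) * Real.sin s)) := by
    apply Continuous.div (by fun_prop) (by fun_prop)
    exact fun s => (hD' s).ne'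
  have hcont4 : Continuous fun s => ((1 + Real.cos s) * Real.cos s - Real.sin s ^ 2) / (1 - κ * ((1 + Real.cos s) * Real.sin s)) := by
    apply Continuous.div (by fun_prop) (by fun_prop)
    exact fun s => (hD s).ne'
  have hI1 : IntervalIntegrable (fun s => (1 + Real.cos s) * Real.cos s / (1 - κ * ((1 + Real.cos s) * Real.sin s))) MeasureTheory.volume (0:ℝ) (2 * π) := hcont1.intervalIntegrable _ _
  have hI2 : IntervalIntegrable (fun s => Real.sin s ^ 2 / (1 - κ * ((1 + Real.cos s) * Real.sin s))) MeasureTheory.volume (0:ℝ) (2 * π) := hcont2.intervalIntegrable _ _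
  have hI3 : IntervalIntegrable (fun s => Real.sin s ^ 2 / (1 + κ * ((1 + Real.cos s) * Real.sin s))) MeasureTheory.volume (0:ℝ) (2 * π) := hcont3.intervalIntegrable _ _
  -- Part 1: the identity
  set F : ℝ → ℝ := fun s => -κ⁻¹ * Real.log (1 - κ * ((1 + Real.cos s) * Real.sin s)) with hF_def
  have hF : ∀ s : ℝ, HasDerivAt F
      (((1 + Real.cos s) * Real.cos s - Real.sin s ^ 2) / (1 - κ * ((1 + Real.cos s) * Real.sin s))) s := by
    intro s
    have h1 : HasDerivAt (fun s => (1 + Real.cos s) * Real.sin s)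
        ((0 + -Real.sin s) * Real.sin s + (1 + Real.cos s) * Real.cos s) s :=
      ((hasDerivAt_const s (1:ℝ)).add (Real.hasDerivAt_cos s)).mul (Real.hasDerivAt_sin s)
    have h2 : HasDerivAt (fun s => 1 - κ * ((1 + Real.cos s) * Real.sin s))
        (0 - κ * ((0 + -Real.sin s) * Real.sin s + (1 + Real.cos s) * Real.cos s)) s :=
      (hasDerivAt_const s (1:ℝ)).sub (h1.const_mul κ)
    have h3 := (h2.log (hD s).ne').const_mul (-κ⁻¹)
    refine h3.congr_deriv ?_
    field_simp [hκ0.ne']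
    ring
  have key : ∫ s in (0:ℝ)..(2 * π),
      ((1 + Real.cos s) * Real.cos s - Real.sin s ^ 2) / (1 - κ * ((1 + Real.cos s) * Real.sin s))
      = F (2 * π) - F 0 :=
    integral_eq_sub_of_hasDerivAt (fun s _ => hF s) (hcont4.intervalIntegrable _ _)
  have hFper : F (2 * π) - F 0 = 0 := by
    simp [hF_def, Real.cos_two_pi, Real.sin_two_pi]
  have part1 : (∫ s in (0:ℝ)..(2 * π),
        (1 + Real.cos s) * Real.cos s / (1 - κ * ((1 + Real.cos s) * Real.sin s)))
      = ∫ s in (0:ℝ)..(2 * π),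
          Real.sin s ^ 2 / (1 - κ * ((1 + Real.cos s) * Real.sin s)) := by
    have hsub : (∫ s in (0:ℝ)..(2 * π),
          (1 + Real.cos s) * Real.cos s / (1 - κ * ((1 + Real.cos s) * Real.sin s)))
        - (∫ s in (0:ℝ)..(2 * π),
          Real.sin s ^ 2 / (1 - κ * ((1 + Real.cos s) * Real.sin s))) = 0 := by
      rw [← integral_sub hI1 hI2]
      calc (∫ s in (0:ℝ)..(2 * π),
            ((1 + Real.cos s) * Real.cos s / (1 - κ * ((1 + Real.cos s) * Real.sin s))
              - Real.sin s ^ 2 / (1 - κ * ((1 + Real.cos s) * Real.sin s))))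
          = ∫ s in (0:ℝ)..(2 * π),
            ((1 + Real.cos s) * Real.cos s - Real.sin s ^ 2) / (1 - κ * ((1 + Real.cos s) * Real.sin s)) := by
            apply integral_congr
            intro s _
            simp only [div_sub_div_same]
        _ = 0 := by rw [key, hFper]
    linarith
  refine ⟨part1, ?_⟩
  -- Part 2: the bound
  set I := ∫ s in (0:ℝ)..(2 * π), Real.sin s ^ 2 / (1 - κ * ((1 + Real.cos s) * Real.sin s)) with hI_def
  have hrefl : I = ∫ s in (0:ℝ)..(2 * π), Real.sin s ^ 2 / (1 + κ * ((1 + Real.cos s) * Real.sin s)) := by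
    have h := intervalIntegral.integral_comp_sub_left
      (a := (0:ℝ)) (b := 2 * π)
      (fun x => Real.sin x ^ 2 / (1 - κ * ((1 + Real.cos x) * Real.sin x))) (2 * π)
    simp only [sub_self, sub_zero] at h
    rw [hI_def, ← h]
    apply integral_congr
    intro s _
    simp only [Real.sin_sub, Real.cos_sub, Real.sin_two_pi, Real.cos_two_pi]
    ring_nf
  have hadd : I + I = ∫ s in (0:ℝ)..(2 * π),
      (Real.sin s ^ 2 / (1 - κ * ((1 + Real.cos s) * Real.sin s))
        + Real.sin s ^ 2 / (1 + κ * ((1 + Real.cos s) * Real.sin s))) := by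
    nth_rewrite 2 [hrefl]
    nth_rewrite 1 [hI_def]
    exact (integral_add hI2 hI3).symm
  have hlow : ∫ s in (0:ℝ)..(2 * π), 2 * Real.sin s ^ 2
      ≤ ∫ s in (0:ℝ)..(2 * π),
      (Real.sin s ^ 2 / (1 - κ * ((1 + Real.cos s) * Real.sin s))
        + Real.sin s ^ 2 / (1 + κ * ((1 + Real.cos s) * Real.sin s))) := by
    apply integral_mono_on (by positivity)
      ((by fun_prop : Continuous fun s : ℝ => 2 * Real.sin s ^ 2).intervalIntegrable _ _)
      (hI2.add hI3)
    intro s _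
    have h1 := hD s
    have h2 := hD' s
    rw [div_add_div _ _ h1.ne' h2.ne', le_div_iff₀ (by positivity)]
    nlinarith [mul_nonneg (sq_nonneg (Real.sin s)) (sq_nonneg (κ * ((1 + Real.cos s) * Real.sin s)))]
  have hsinsq : ∫ s in (0:ℝ)..(2 * π), 2 * Real.sin s ^ 2 = 2 * π := by
    rw [intervalIntegral.integral_const_mul, integral_sin_sq]
    simp [Real.sin_two_pi, Real.cos_two_pi]
  have hpi := Real.pi_pos
  linarith
end
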